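/- arXiv:2311.09454 — 3 statements merged into one kernel-verified Lean document; each statement's English description precedes it below -/
import Mathlib

section
/- Let k ≥ 2, let S = S^{k−1} be the unit sphere of ℝ^k, and let ν be a probability measure on ℝ^k with ∫‖y‖² ν(dy) < ∞. Define m(V) = ∫⟨y, V⟩ ν(dy) and the tangent covariance kernel Σ(U, V) = ∫(⟨y, U⟩ − m(U))·(⟨y, V⟩ − m(V)) ν(dy) for U, V ∈ S. Let G : Ω × S → ℝ be a Gaussian tangent field with covariance Σ, i.e. a stochastic process such that for every finite tuple V₁, …, V_m ∈ S the random vector (G(V₁), …, G(V_m)) is centered multivariate Gaussian with covariance matrix (Σ(V_i, V_j))_{i,j}. Then there exists a version of G which, almost surely, is γ-Hölder continuous on S for every Hölder exponent γ ∈ (0, 1). -/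
open MeasureTheory ProbabilityTheory Metric Filter
open scoped RealInnerProductSpace NNReal ENNReal

/-- The tangent mean function `m(V) = ∫ ⟪y, V⟫ ν(dy)` of a measure `ν` on `ℝ^k`. -/
noncomputable def tangentMean {k : ℕ} (ν : Measure (EuclideanSpace ℝ (Fin k)))
    (V : EuclideanSpace ℝ (Fin k)) : ℝ :=
  ∫ y, ⟪y, V⟫ ∂ν

/-- The tangent covariance kernel
`Σ(U,V) = ∫ (⟪y,U⟫ - m(U))·(⟪y,V⟫ - m(V)) ν(dy)` of a measure `ν` on `ℝ^k`. -/
noncomputable def tangentCovKernel {k : ℕ} (ν : Measure (EuclideanSpace ℝ (Fin k)))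
    (U V : EuclideanSpace ℝ (Fin k)) : ℝ :=
  ∫ y, (⟪y, U⟫ - tangentMean ν U) * (⟪y, V⟫ - tangentMean ν V) ∂ν

/-- A stochastic process `G : Ω × S → ℝ` is a Gaussian tangent field with covariance
kernel `Sig` if all its finite-dimensional marginals are centered multivariate Gaussian
with covariance matrix `(Sig(Vᵢ, Vⱼ))`; equivalently (Cramér–Wold), every finite linear
combination `∑ cᵢ G(Vᵢ)` is a centered real Gaussian with variance `∑ᵢⱼ cᵢ cⱼ Sig(Vᵢ,Vⱼ)`. -/
def IsGaussianTangentField {Ω S : Type*} [MeasurableSpace Ω] (P : Measure Ω)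
    (G : Ω → S → ℝ) (Sig : S → S → ℝ) : Prop :=
  ∀ (m : ℕ) (V : Fin m → S) (c : Fin m → ℝ),
    Measure.map (fun ω => ∑ i, c i * G ω (V i)) P
      = gaussianReal 0 (∑ i, ∑ j, c i * c j * Sig (V i) (V j)).toNNReal

section Aux
variable {k : ℕ} {ν : Measure (EuclideanSpace ℝ (Fin k))} [IsProbabilityMeasure ν]

lemma memL2_id (hν : Integrable (fun y => ‖y‖ ^ 2) ν) :
    MemLp (fun y : EuclideanSpace ℝ (Fin k) => y) 2 ν := by
  rw [show (fun y : EuclideanSpace ℝ (Fin k) => y) = id from rfl,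
    memLp_two_iff_integrable_sq_norm aestronglyMeasurable_id]
  exact hν

lemma memL2_centered (hν : Integrable (fun y => ‖y‖ ^ 2) ν) (V : EuclideanSpace ℝ (Fin k)) :
    MemLp (fun y => ⟪y, V⟫ - tangentMean ν V) 2 ν :=
  ((memL2_id hν).inner_const V).sub (memLp_const _)

lemma integrable_centered_mul (hν : Integrable (fun y => ‖y‖ ^ 2) ν)
    (U V : EuclideanSpace ℝ (Fin k)) :
    Integrable (fun y => (⟪y, U⟫ - tangentMean ν U) * (⟪y, V⟫ - tangentMean ν V)) ν := by
  rw [← memLp_one_iff_integrable]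
  have := (memL2_centered hν V).smul (memL2_centered hν U)
    (p := 2) (q := 2) (r := 1)
  simpa [smul_eq_mul, Pi.mul_def] using this

lemma covsum_zero (hν : Integrable (fun y => ‖y‖ ^ 2) ν) {m : ℕ}
    (V : Fin m → EuclideanSpace ℝ (Fin k)) (c : Fin m → ℝ)
    (h : ∑ i, c i • V i = 0) :
    ∑ i, ∑ j, c i * c j * tangentCovKernel ν (V i) (V j) = 0 := by
  set f : Fin m → EuclideanSpace ℝ (Fin k) → ℝ :=
    fun i y => ⟪y, V i⟫ - tangentMean ν (V i) with hf
  have hsum : ∀ y, ∑ j, c j * f j y = 0 := by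
    intro y
    have h1 : ∑ j, c j * ⟪y, V j⟫ = 0 := by
      have : ⟪y, ∑ j, c j • V j⟫ = ∑ j, c j * ⟪y, V j⟫ := by
        rw [inner_sum]
        exact Finset.sum_congr rfl fun j _ => by rw [real_inner_smul_right]
      rw [← this, h, inner_zero_right]
    have h2 : ∑ j, c j * tangentMean ν (V j) = 0 := by
      have : ∑ j, c j * tangentMean ν (V j)
          = ∫ y, ∑ j, c j * ⟪y, V j⟫ ∂ν := by
        rw [integral_finset_sum]
        · simp only [tangentMean]
          refine Finset.sum_congr rfl fun j _ => ?_
          rw [integral_const_mul]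
        · intro j _
          exact (((memL2_id hν).inner_const (V j)).integrable one_le_two).const_mul _
      rw [this]
      have : ∀ y : EuclideanSpace ℝ (Fin k), ∑ j, c j * ⟪y, V j⟫ = 0 := fun y => by
        have : ⟪y, ∑ j, c j • V j⟫ = ∑ j, c j * ⟪y, V j⟫ := by
          rw [inner_sum]
          exact Finset.sum_congr rfl fun j _ => by rw [real_inner_smul_right]
        rw [← this, h, inner_zero_right]
      simp only [this, integral_zero]
    calc ∑ j, c j * f j y = ∑ j, c j * ⟪y, V j⟫ - ∑ j, c j * tangentMean ν (V j) := by
          rw [← Finset.sum_sub_distrib]; simp [hf, mul_sub]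
      _ = 0 := by rw [h1, h2, sub_zero]
  have key : ∀ i, ∑ j, c j * tangentCovKernel ν (V i) (V j) = 0 := by
    intro i
    have : ∑ j, c j * tangentCovKernel ν (V i) (V j)
        = ∫ y, f i y * ∑ j, c j * f j y ∂ν := by
      have : ∫ y, f i y * ∑ j, c j * f j y ∂ν
          = ∫ y, ∑ j, c j * (f i y * f j y) ∂ν := by
        congr 1; funext y; rw [Finset.mul_sum]; congr 1; funext j; ring
      rw [this, integral_finset_sum]
      · refine Finset.sum_congr rfl fun j _ => ?_
        rw [integral_const_mul]; rfl
      · intro j _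
        exact (integrable_centered_mul hν (V i) (V j)).const_mul _
    rw [this]
    simp only [hsum, mul_zero, integral_zero]
  calc ∑ i, ∑ j, c i * c j * tangentCovKernel ν (V i) (V j)
      = ∑ i, c i * ∑ j, c j * tangentCovKernel ν (V i) (V j) := by
        refine Finset.sum_congr rfl fun i _ => ?_
        rw [Finset.mul_sum]; congr 1; funext j; ring
    _ = 0 := by simp [key]

lemma euclid_coord_abs_le (x : EuclideanSpace ℝ (Fin k)) (i : Fin k) : |x i| ≤ ‖x‖ := by
  have h := abs_real_inner_le_norm x (EuclideanSpace.single i (1 : ℝ))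
  rw [EuclideanSpace.inner_single_right] at h
  simpa using h

lemma euclid_sum_single (x : EuclideanSpace ℝ (Fin k)) :
    ∑ i, x i • EuclideanSpace.single i (1 : ℝ) = x := by
  ext j
  have : (∑ i, x i • EuclideanSpace.single i (1 : ℝ)) j
      = ∑ i, x i • (EuclideanSpace.single i (1 : ℝ) j) := by
    rw [WithLp.ofLp_sum, Finset.sum_apply]; rfl
  rw [this]
  simp [EuclideanSpace.single_apply, mul_comm]

lemma ennreal_holder_aux {d : ℝ≥0∞} (hd2 : d ≤ 2) (hdt : d ≠ ⊤) {γ : ℝ≥0}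
    (hγ : 0 < γ) (hγ1 : (γ : ℝ) < 1) : d ≤ 2 * d ^ (γ : ℝ) := by
  rcases eq_or_ne d 0 with rfl | hd0
  · simp
  · have hdd : d = d ^ (γ : ℝ) * d ^ (1 - (γ : ℝ)) := by
      rw [← ENNReal.rpow_add _ _ hd0 hdt]
      norm_num
    calc d = d ^ (γ : ℝ) * d ^ (1 - (γ : ℝ)) := hdd
      _ ≤ d ^ (γ : ℝ) * 2 ^ (1 - (γ : ℝ)) :=
          mul_le_mul_right (ENNReal.rpow_le_rpow hd2 (by linarith [γ.coe_nonneg])) _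
      _ ≤ d ^ (γ : ℝ) * 2 ^ (1 : ℝ) :=
          mul_le_mul_right (ENNReal.rpow_le_rpow_of_exponent_le one_le_two (by linarith [γ.coe_nonneg])) _
      _ = 2 * d ^ (γ : ℝ) := by rw [ENNReal.rpow_one, mul_comm]

end Aux

/-- A Gaussian tangent field on the unit sphere `S^{k-1}` whose covariance is the tangent
covariance kernel of a measure `ν` on `ℝ^k` with finite second moment admits a version
that is almost surely `γ`-Hölder continuous for every Hölder exponent `γ ∈ (0,1)`. -/
theorem gaussianTangentField_holder_version
    (k : ℕ) (hk : 2 ≤ k)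
    (ν : Measure (EuclideanSpace ℝ (Fin k))) [IsProbabilityMeasure ν]
    (hν : Integrable (fun y => ‖y‖ ^ 2) ν)
    {Ω : Type*} [MeasurableSpace Ω] (P : Measure Ω) [IsProbabilityMeasure P]
    (G : Ω → sphere (0 : EuclideanSpace ℝ (Fin k)) 1 → ℝ)
    (hGmeas : Measurable fun q : Ω × sphere (0 : EuclideanSpace ℝ (Fin k)) 1 => G q.1 q.2)
    (hG : IsGaussianTangentField P G
      (fun U V => tangentCovKernel ν (U : EuclideanSpace ℝ (Fin k)) (V : EuclideanSpace ℝ (Fin k)))) :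
    ∃ Ghat : Ω → sphere (0 : EuclideanSpace ℝ (Fin k)) 1 → ℝ,
      (∀ V, ∀ᵐ ω ∂P, G ω V = Ghat ω V) ∧
      (∀ᵐ ω ∂P, ∀ γ : ℝ≥0, 0 < γ → (γ : ℝ) < 1 →
        ∃ C : ℝ≥0, HolderWith C γ (Ghat ω)) := by
  have hG' := hG
  unfold IsGaussianTangentField at hG'

  set E := EuclideanSpace ℝ (Fin k)
  -- basis points on the sphere
  set e : Fin k → sphere (0 : E) 1 := fun i =>
    ⟨EuclideanSpace.single i (1 : ℝ), by
      rw [mem_sphere_zero_iff_norm, EuclideanSpace.norm_single, norm_one]⟩ with he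
  set Ghat : Ω → sphere (0 : E) 1 → ℝ :=
    fun ω V => ∑ i, (V : E) i * G ω (e i) with hGhat
  have hGVmeas : ∀ s : sphere (0 : E) 1, Measurable fun ω => G ω s := fun s =>
    hGmeas.comp (measurable_id.prodMk measurable_const)
  refine ⟨Ghat, ?_, ?_⟩
  · intro V
    -- the degenerate Gaussian argument
    set W : Fin (k + 1) → sphere (0 : E) 1 := Fin.cons V e with hW
    set c : Fin (k + 1) → ℝ := Fin.cons 1 (fun i => -((V : E) i)) with hc
    have hzero : ∑ i, c i • (W i : E) = 0 := by
      rw [Fin.sum_univ_succ]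
      simp only [hc, hW, Fin.cons_zero, Fin.cons_succ, one_smul]
      have : ∑ i : Fin k, (-((V : E) i)) • ((e i : E))
          = -∑ i : Fin k, ((V : E) i) • EuclideanSpace.single i (1 : ℝ) := by
        rw [← Finset.sum_neg_distrib]
        exact Finset.sum_congr rfl fun i _ => by simp [he]
      rw [this, euclid_sum_single]
      simp
    have hcov : (∑ i, ∑ j, c i * c j *
        tangentCovKernel ν (W i : E) (W j : E)).toNNReal = 0 := by
      rw [covsum_zero hν _ _ hzero]
      simp
    have hmap := hG' (k + 1) W c
    rw [hcov, gaussianReal_zero_var] at hmap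
    set X : Ω → ℝ := fun ω => ∑ i, c i * G ω (W i) with hX
    have hXmeas : Measurable X := by
      apply Finset.measurable_sum
      intro i _
      exact (hGVmeas (W i)).const_mul _
    have hXzero : ∀ᵐ ω ∂P, X ω = 0 := by
      have hset : {ω | ¬ X ω = 0} = X ⁻¹' ({0}ᶜ) := rfl
      have : P {ω | ¬ X ω = 0} = 0 := by
        rw [hset, ← Measure.map_apply hXmeas (measurableSet_singleton 0).compl, hmap,
          Measure.dirac_apply' _ (measurableSet_singleton 0).compl]
        simp
      exact this
    filter_upwards [hXzero] with ω hω
    have hXω : X ω = G ω V - Ghat ω V := by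
      have h1 : X ω = G ω V + ∑ i : Fin k, (-((V : E) i)) * G ω (e i) := by
        show ∑ i : Fin (k + 1), c i * G ω (W i) = _
        rw [Fin.sum_univ_succ]
        simp only [hc, hW, Fin.cons_zero, Fin.cons_succ, one_mul]
      rw [h1, hGhat]
      simp only [neg_mul]
      rw [Finset.sum_neg_distrib]
      ring
    rw [hXω] at hω
    linarith
  · refine ae_of_all _ fun ω γ hγ hγ1 => ?_
    set L : ℝ≥0 := ∑ i, ‖G ω (e i)‖₊ with hL
    have hlip : LipschitzWith L (Ghat ω) := by
      apply LipschitzWith.of_dist_le_mul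
      intro U V'
      have hdist : dist U V' = ‖(U : E) - (V' : E)‖ := by
        rw [Subtype.dist_eq, dist_eq_norm]
      rw [Real.dist_eq, hGhat]
      have : (∑ i, (U : E) i * G ω (e i)) - ∑ i, (V' : E) i * G ω (e i)
          = ∑ i, ((U : E) i - (V' : E) i) * G ω (e i) := by
        rw [← Finset.sum_sub_distrib]
        exact Finset.sum_congr rfl fun i _ => by ring
      rw [this]
      calc |∑ i, ((U : E) i - (V' : E) i) * G ω (e i)|
          ≤ ∑ i, |((U : E) i - (V' : E) i) * G ω (e i)| := Finset.abs_sum_le_sum_abs _ _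
        _ ≤ ∑ i, ‖(U : E) - (V' : E)‖ * |G ω (e i)| := by
            refine Finset.sum_le_sum fun i _ => ?_
            rw [abs_mul]
            refine mul_le_mul_of_nonneg_right ?_ (abs_nonneg _)
            exact euclid_coord_abs_le ((U : E) - (V' : E)) i
        _ = (∑ i, |G ω (e i)|) * ‖(U : E) - (V' : E)‖ := by
            rw [← Finset.mul_sum, mul_comm]
        _ = L * dist U V' := by
            rw [hdist, hL]
            push_cast [Real.norm_eq_abs]
            rfl
    refine ⟨2 * L, fun U V' => ?_⟩
    have hd2 : edist U V' ≤ 2 := by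
      rw [Subtype.edist_eq, edist_dist]
      have h1 : dist (U : E) (V' : E) ≤ 2 := by
        have hU : ‖(U : E)‖ = 1 := mem_sphere_zero_iff_norm.mp U.2
        have hV : ‖(V' : E)‖ = 1 := mem_sphere_zero_iff_norm.mp V'.2
        calc dist (U : E) (V' : E) = ‖(U : E) - (V' : E)‖ := dist_eq_norm _ _
          _ ≤ ‖(U : E)‖ + ‖(V' : E)‖ := norm_sub_le _ _
          _ = 2 := by rw [hU, hV]; norm_num
      calc ENNReal.ofReal (dist (U : E) (V' : E)) ≤ ENNReal.ofReal 2 :=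
            ENNReal.ofReal_le_ofReal h1
        _ = 2 := by norm_num
    calc edist (Ghat ω U) (Ghat ω V') ≤ L * edist U V' := hlip U V'
      _ ≤ L * (2 * edist U V' ^ (γ : ℝ)) :=
          mul_le_mul_right (ennreal_holder_aux hd2 (edist_ne_top _ _) hγ hγ1) _
      _ = (2 * L : ℝ≥0) * edist U V' ^ (γ : ℝ) := by
          push_cast
          ring
end

section
/- Let k ≥ 2, let S = S^{k−1} be the unit sphere of ℝ^k, let x₁, x₂, … be i.i.d. ℝ^k-valued random variables distributed as x, let a be an even integer with a > k − 1 and γ_a := E‖x‖^a < ∞, and let G_n(V) = n^{-1/2}·Σ_{i=1}^n (⟨x_i, V⟩ − E⟨x, V⟩) be the empirical tangent field (taking its almost surely continuous realization). Define the modulus of continuity w(h, r) = sup{|h(V) − h(U)| : U, V ∈ S, ‖V − U‖ ≤ r}. Then there exist a finite constant C and an integer M such that for all n ≥ 1 and all m ≥ M, E[w(G_n, 2^{-m})^a] ≤ C·2^{-m·(a − (k−1))}; consequently lim_{m→∞} limsup_{n→∞} E[min(w(G_n, 2^{-m}), 1)] = 0. -/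
open MeasureTheory ProbabilityTheory Metric Filter Topology
open scoped RealInnerProductSpace NNReal

/-- The empirical tangent field
`G_n(V) = n^{-1/2} ∑_{i=1}^n (⟪xᵢ, V⟫ - E⟪x, V⟫)` induced by random variables
`x₁, x₂, …` distributed as `x₀`. -/
noncomputable def empiricalTangentField {Ω H : Type*} [MeasurableSpace Ω]
    [NormedAddCommGroup H] [InnerProductSpace ℝ H]
    (P : Measure Ω) (x : ℕ → Ω → H) (x₀ : Ω → H)
    (n : ℕ) (V : H) (ω : Ω) : ℝ :=
  (Real.sqrt n)⁻¹ * ∑ i ∈ Finset.range n, (⟪x i ω, V⟫ - ∫ ω', ⟪x₀ ω', V⟫ ∂P)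

/-- The modulus of continuity `w(h, r) = sup {|h(V) - h(U)| : dist(V, U) ≤ r}` of a
function `h` on a metric space. -/
noncomputable def modulusOfContinuity {S : Type*} [MetricSpace S] (h : S → ℝ) (r : ℝ) : ℝ :=
  sSup {t : ℝ | ∃ U V : S, dist V U ≤ r ∧ t = |h V - h U|}


section Helpers

/-- Counting: functions `Fin a → range n` whose image has at most `h` elements. -/
lemma count_small_image (n a h : ℕ) (hn : 1 ≤ n) :
    ((Fintype.piFinset fun _ : Fin a => Finset.range n).filter
      (fun g => (Finset.image g Finset.univ).card ≤ h)).card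
      ≤ (h + 1) * h ^ a * n ^ h := by
  classical
  set 𝒯 := (Finset.range n).powerset.filter (fun T => T.card ≤ h) with h𝒯
  have hsub : ((Fintype.piFinset fun _ : Fin a => Finset.range n).filter
      (fun g => (Finset.image g Finset.univ).card ≤ h))
      ⊆ 𝒯.biUnion (fun T => Fintype.piFinset (fun _ : Fin a => T)) := by
    intro g hg
    rw [Finset.mem_filter] at hg
    obtain ⟨hg1, hg2⟩ := hg
    refine Finset.mem_biUnion.mpr ⟨Finset.image g Finset.univ, ?_, ?_⟩
    · rw [h𝒯, Finset.mem_filter, Finset.mem_powerset]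
      refine ⟨?_, hg2⟩
      intro i hi
      rw [Finset.mem_image] at hi
      obtain ⟨t, -, rfl⟩ := hi
      exact Fintype.mem_piFinset.mp hg1 t
    · exact Fintype.mem_piFinset.mpr fun t => Finset.mem_image_of_mem g (Finset.mem_univ t)
  have hcardT : 𝒯.card ≤ (h + 1) * n ^ h := by
    have hsub2 : 𝒯 ⊆ (Finset.range (h + 1)).biUnion
        (fun s => Finset.powersetCard s (Finset.range n)) := by
      intro T hT
      rw [h𝒯, Finset.mem_filter, Finset.mem_powerset] at hT
      exact Finset.mem_biUnion.mpr ⟨T.card, Finset.mem_range.mpr (Nat.lt_succ_of_le hT.2),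
        (Finset.mem_powersetCard).mpr ⟨hT.1, rfl⟩⟩
    calc 𝒯.card ≤ ((Finset.range (h + 1)).biUnion
          (fun s => Finset.powersetCard s (Finset.range n))).card :=
        Finset.card_le_card hsub2
      _ ≤ ∑ s ∈ Finset.range (h + 1), (Finset.powersetCard s (Finset.range n)).card :=
        Finset.card_biUnion_le
      _ ≤ ∑ s ∈ Finset.range (h + 1), n ^ h := by
          refine Finset.sum_le_sum fun s hs => ?_
          rw [Finset.card_powersetCard, Finset.card_range]
          exact le_trans (Nat.choose_le_pow n s)
            (Nat.pow_le_pow_right hn (Nat.lt_succ_iff.mp (Finset.mem_range.mp hs)))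
      _ = (h + 1) * n ^ h := by rw [Finset.sum_const, Finset.card_range, smul_eq_mul]
  calc ((Fintype.piFinset fun _ : Fin a => Finset.range n).filter
      (fun g => (Finset.image g Finset.univ).card ≤ h)).card
      ≤ (𝒯.biUnion (fun T => Fintype.piFinset (fun _ : Fin a => T))).card :=
        Finset.card_le_card hsub
    _ ≤ ∑ T ∈ 𝒯, (Fintype.piFinset (fun _ : Fin a => T)).card := Finset.card_biUnion_le
    _ ≤ ∑ T ∈ 𝒯, h ^ a := by
        refine Finset.sum_le_sum fun T hT => ?_
        rw [Fintype.card_piFinset]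
        rw [h𝒯, Finset.mem_filter] at hT
        calc ∏ _i : Fin a, T.card ≤ ∏ _i : Fin a, h :=
            Finset.prod_le_prod' fun _ _ => hT.2
          _ = h ^ a := by rw [Finset.prod_const, Finset.card_univ, Fintype.card_fin]
    _ = 𝒯.card * h ^ a := by rw [Finset.sum_const, smul_eq_mul]
    _ ≤ ((h + 1) * n ^ h) * h ^ a := Nat.mul_le_mul_right _ hcardT
    _ = (h + 1) * h ^ a * n ^ h := by ring



variable {Ω : Type*} [MeasurableSpace Ω] {P : Measure Ω} [IsProbabilityMeasure P]

/-- Integral of a product of independent integrable random variables. -/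
lemma indep_prod_integral (f : ℕ → Ω → ℝ) (hmeas : ∀ i, Measurable (f i))
    (hindep : iIndepFun f P)
    (hint : ∀ i, Integrable (f i) P) (T : Finset ℕ) :
    Integrable (fun ω => ∏ i ∈ T, f i ω) P ∧
      (∫ ω, ∏ i ∈ T, f i ω ∂P) = ∏ i ∈ T, ∫ ω, f i ω ∂P := by
  classical
  induction T using Finset.cons_induction with
  | empty => simp
  | cons i T hi IH =>
    have hIndep : IndepFun (∏ j ∈ T, f j) (f i) P :=
      hindep.indepFun_finset_prod_of_notMem hmeas hi
    have hfn : (∏ j ∈ T, f j) = fun ω => ∏ j ∈ T, f j ω := by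
      funext ω; exact Finset.prod_apply ω T f
    rw [hfn] at hIndep
    have hInt : Integrable (fun ω => f i ω * ∏ j ∈ T, f j ω) P := by
      have := hIndep.symm.integrable_mul (hint i) IH.1
      exact this
    constructor
    · have : (fun ω => ∏ j ∈ Finset.cons i T hi, f j ω) = fun ω => f i ω * ∏ j ∈ T, f j ω := by
        funext ω; rw [Finset.prod_cons]
      rw [this]; exact hInt
    · have := hIndep.symm.integral_mul_eq_mul_integral (hint i).1 IH.1.1
      simp only [Finset.prod_cons]
      calc (∫ ω, f i ω * ∏ j ∈ T, f j ω ∂P)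
          = (∫ ω, f i ω ∂P) * ∫ ω, ∏ j ∈ T, f j ω ∂P := by
            simpa [Pi.mul_apply] using this
        _ = (∫ ω, f i ω ∂P) * ∏ j ∈ T, ∫ ω, f j ω ∂P := by rw [IH.2]



variable {Ω : Type*} [MeasurableSpace Ω] {P : Measure Ω} [IsProbabilityMeasure P]

lemma abs_pow_le_one_add_abs_pow (w : ℝ) {c a : ℕ} (hca : c ≤ a) :
    |w| ^ c ≤ 1 + |w| ^ a := by
  rcases le_total |w| 1 with hw | hw
  · have : |w| ^ c ≤ 1 := pow_le_one₀ (abs_nonneg w) hw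
    have h2 : (0:ℝ) ≤ |w| ^ a := pow_nonneg (abs_nonneg w) a
    linarith
  · have : |w| ^ c ≤ |w| ^ a := pow_le_pow_right₀ hw hca
    linarith

lemma scalar_moment_bound (W : ℕ → Ω → ℝ) (W₀ : Ω → ℝ) (hW₀ : Measurable W₀)
    (hWm : ∀ i, Measurable (W i))
    (hindep : iIndepFun W P)
    (hid : ∀ i, IdentDistrib (W i) W₀ P P)
    (hcent : (∫ ω, W₀ ω ∂P) = 0)
    (h : ℕ) (hh : 1 ≤ h)
    (hint : Integrable (fun ω => |W₀ ω| ^ (2 * h)) P)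
    (n : ℕ) (hn : 1 ≤ n) :
    Integrable (fun ω => (∑ i ∈ Finset.range n, W i ω) ^ (2 * h)) P ∧
      (∫ ω, (∑ i ∈ Finset.range n, W i ω) ^ (2 * h) ∂P)
        ≤ (((h + 1) * h ^ (2 * h) * n ^ h : ℕ) : ℝ)
            * (1 + ∫ ω, |W₀ ω| ^ (2 * h) ∂P) ^ (2 * h) := by
  classical
  set a := 2 * h with ha
  set B := ∫ ω, |W₀ ω| ^ a ∂P with hB
  have hB0 : 0 ≤ B := integral_nonneg fun ω => pow_nonneg (abs_nonneg _) _
  -- integrability of |W i|^a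
  have hintWia : ∀ i, Integrable (fun ω => |W i ω| ^ a) P := fun i =>
    ((hid i).comp (measurable_id.abs.pow_const a)).integrable_iff.mpr hint
  have hBi : ∀ i, (∫ ω, |W i ω| ^ a ∂P) = B :=
    fun i => ((hid i).comp (measurable_id.abs.pow_const a)).integral_eq
  -- integrability of powers of W i
  have hintpow : ∀ (i : ℕ) (c : ℕ), c ≤ a → Integrable (fun ω => W i ω ^ c) P := by
    intro i c hca
    refine Integrable.mono' ((integrable_const 1).add (hintWia i))
      ((hWm i).pow_const c).aestronglyMeasurable (Filter.Eventually.of_forall fun ω => ?_)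
    rw [Real.norm_eq_abs, abs_pow]
    exact abs_pow_le_one_add_abs_pow _ hca
  -- bound on |∫ W i ^ c| for 1 ≤ c... any c ≤ a
  have habs : ∀ (i : ℕ) (c : ℕ), c ≤ a → |∫ ω, W i ω ^ c ∂P| ≤ 1 + B := by
    intro i c hca
    calc |∫ ω, W i ω ^ c ∂P| ≤ ∫ ω, |W i ω ^ c| ∂P := by
          simpa [Real.norm_eq_abs] using
            norm_integral_le_integral_norm (μ := P) (fun ω => W i ω ^ c)
      _ ≤ ∫ ω, (1 + |W i ω| ^ a) ∂P := by
          refine integral_mono_of_nonneg (Filter.Eventually.of_forall fun ω => abs_nonneg _)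
            ((integrable_const 1).add (hintWia i))
            (Filter.Eventually.of_forall fun ω => ?_)
          show |W i ω ^ c| ≤ 1 + |W i ω| ^ a
          rw [abs_pow]
          exact abs_pow_le_one_add_abs_pow _ hca
      _ = 1 + B := by
          rw [integral_add (integrable_const 1) (hintWia i), integral_const]
          simp [hBi i]
  -- expansion of the power of the sum
  have expand : ∀ ω, (∑ i ∈ Finset.range n, W i ω) ^ a
      = ∑ g ∈ Fintype.piFinset (fun _ : Fin a => Finset.range n),
          ∏ t : Fin a, W (g t) ω := by
    intro ω
    calc (∑ i ∈ Finset.range n, W i ω) ^ a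
        = ∏ _t : Fin a, ∑ i ∈ Finset.range n, W i ω := by
          rw [Finset.prod_const, Finset.card_univ, Fintype.card_fin]
      _ = ∑ g ∈ Fintype.piFinset (fun _ : Fin a => Finset.range n),
            ∏ t : Fin a, W (g t) ω := Finset.prod_univ_sum _ _
  -- fiber counts
  set c : (Fin a → ℕ) → ℕ → ℕ := fun g i => (Finset.univ.filter (fun t => g t = i)).card with hc
  have prodeq : ∀ (g : Fin a → ℕ) ω,
      ∏ t : Fin a, W (g t) ω = ∏ i ∈ Finset.image g Finset.univ, W i ω ^ c g i := by
    intro g ω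
    exact Finset.prod_comp (fun i => W i ω) g
  have hcle : ∀ (g : Fin a → ℕ) i, c g i ≤ a := by
    intro g i
    calc c g i ≤ Finset.univ.card := Finset.card_filter_le _ _
      _ = a := by rw [Finset.card_univ, Fintype.card_fin]
  -- the powered family is independent, so integrals of products factor
  have key : ∀ g : Fin a → ℕ,
      Integrable (fun ω => ∏ i ∈ Finset.image g Finset.univ, W i ω ^ c g i) P ∧
      (∫ ω, ∏ i ∈ Finset.image g Finset.univ, W i ω ^ c g i ∂P)
        = ∏ i ∈ Finset.image g Finset.univ, ∫ ω, W i ω ^ c g i ∂P := by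
    intro g
    exact indep_prod_integral (fun i ω => W i ω ^ c g i)
      (fun i => (hWm i).pow_const _)
      (hindep.comp (fun i x => x ^ c g i) (fun i => measurable_id.pow_const _))
      (fun i => hintpow i _ (hcle g i)) _
  have hintg : ∀ g : Fin a → ℕ, Integrable (fun ω => ∏ t : Fin a, W (g t) ω) P := by
    intro g
    have := (key g).1
    have heq : (fun ω => ∏ i ∈ Finset.image g Finset.univ, W i ω ^ c g i)
        = fun ω => ∏ t : Fin a, W (g t) ω := by
      funext ω; rw [prodeq]
    rwa [heq] at this
  -- first conjunct
  have hintsum : Integrable (fun ω => (∑ i ∈ Finset.range n, W i ω) ^ a) P := by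
    have heq : (fun ω => (∑ i ∈ Finset.range n, W i ω) ^ a)
        = fun ω => ∑ g ∈ Fintype.piFinset (fun _ : Fin a => Finset.range n),
            ∏ t : Fin a, W (g t) ω := by
      funext ω; exact expand ω
    rw [heq]
    exact integrable_finset_sum _ fun g _ => hintg g
  refine ⟨hintsum, ?_⟩
  -- compute the integral as a sum of products
  have hI : (∫ ω, (∑ i ∈ Finset.range n, W i ω) ^ a ∂P)
      = ∑ g ∈ Fintype.piFinset (fun _ : Fin a => Finset.range n),
          ∏ i ∈ Finset.image g Finset.univ, ∫ ω, W i ω ^ c g i ∂P := by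
    calc (∫ ω, (∑ i ∈ Finset.range n, W i ω) ^ a ∂P)
        = ∫ ω, ∑ g ∈ Fintype.piFinset (fun _ : Fin a => Finset.range n),
            ∏ t : Fin a, W (g t) ω ∂P := by
          congr 1; funext ω; exact expand ω
      _ = ∑ g ∈ Fintype.piFinset (fun _ : Fin a => Finset.range n),
            ∫ ω, ∏ t : Fin a, W (g t) ω ∂P :=
          integral_finset_sum _ fun g _ => hintg g
      _ = ∑ g ∈ Fintype.piFinset (fun _ : Fin a => Finset.range n),
            ∏ i ∈ Finset.image g Finset.univ, ∫ ω, W i ω ^ c g i ∂P := by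
          refine Finset.sum_congr rfl fun g _ => ?_
          rw [← (key g).2]
          congr 1; funext ω; rw [prodeq]
  -- terms with a singleton fiber vanish
  have hzero : ∀ g : Fin a → ℕ, (∃ i ∈ Finset.image g Finset.univ, c g i = 1) →
      ∏ i ∈ Finset.image g Finset.univ, (∫ ω, W i ω ^ c g i ∂P) = 0 := by
    rintro g ⟨i, hi, hci⟩
    refine Finset.prod_eq_zero hi ?_
    rw [hci]
    simp only [pow_one]
    rw [(hid i).integral_eq, hcent]
  -- if no singleton fiber, the image is small
  have hsmall : ∀ g : Fin a → ℕ, (∀ i ∈ Finset.image g Finset.univ, c g i ≠ 1) →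
      (Finset.image g Finset.univ).card ≤ h := by
    intro g hg
    have hsum : ∑ i ∈ Finset.image g Finset.univ, c g i = a := by
      rw [hc]
      rw [← Finset.card_eq_sum_card_image g Finset.univ]
      rw [Finset.card_univ, Fintype.card_fin]
    have h2le : ∀ i ∈ Finset.image g Finset.univ, 2 ≤ c g i := by
      intro i hi
      have hpos : 0 < c g i := by
        rw [Finset.mem_image] at hi
        obtain ⟨t, -, rfl⟩ := hi
        exact Finset.card_pos.mpr ⟨t, by simp⟩
      have hne := hg i hi
      omega
    have : 2 * (Finset.image g Finset.univ).card ≤ a := by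
      calc 2 * (Finset.image g Finset.univ).card
          = ∑ _i ∈ Finset.image g Finset.univ, 2 := by
            rw [Finset.sum_const, smul_eq_mul, mul_comm]
        _ ≤ ∑ i ∈ Finset.image g Finset.univ, c g i := Finset.sum_le_sum h2le
        _ = a := hsum
    omega
  -- restrict the sum to maps with small image
  set G := (Fintype.piFinset fun _ : Fin a => Finset.range n).filter
      (fun g => (Finset.image g Finset.univ).card ≤ h) with hG
  have hsum_eq : ∑ g ∈ Fintype.piFinset (fun _ : Fin a => Finset.range n),
      ∏ i ∈ Finset.image g Finset.univ, (∫ ω, W i ω ^ c g i ∂P)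
      = ∑ g ∈ G, ∏ i ∈ Finset.image g Finset.univ, (∫ ω, W i ω ^ c g i ∂P) := by
    refine (Finset.sum_subset (Finset.filter_subset _ _) ?_).symm
    intro g hg1 hg2
    rw [Finset.mem_filter, not_and] at hg2
    have : ¬ (Finset.image g Finset.univ).card ≤ h := hg2 hg1
    have hex : ∃ i ∈ Finset.image g Finset.univ, c g i = 1 := by
      by_contra hcon
      push_neg at hcon
      exact this (hsmall g hcon)
    exact hzero g hex
  -- bound each remaining term
  have hterm : ∀ g ∈ G, ∏ i ∈ Finset.image g Finset.univ, (∫ ω, W i ω ^ c g i ∂P)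
      ≤ (1 + B) ^ a := by
    intro g _
    calc ∏ i ∈ Finset.image g Finset.univ, (∫ ω, W i ω ^ c g i ∂P)
        ≤ |∏ i ∈ Finset.image g Finset.univ, (∫ ω, W i ω ^ c g i ∂P)| := le_abs_self _
      _ = ∏ i ∈ Finset.image g Finset.univ, |∫ ω, W i ω ^ c g i ∂P| := Finset.abs_prod _ _
      _ ≤ ∏ _i ∈ Finset.image g Finset.univ, (1 + B) :=
          Finset.prod_le_prod (fun i _ => abs_nonneg _) (fun i _ => habs i _ (hcle g i))
      _ = (1 + B) ^ (Finset.image g Finset.univ).card := Finset.prod_const _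
      _ ≤ (1 + B) ^ a := by
          refine pow_le_pow_right₀ (by linarith) ?_
          calc (Finset.image g Finset.univ).card ≤ (Finset.univ : Finset (Fin a)).card :=
              Finset.card_image_le
            _ = a := by rw [Finset.card_univ, Fintype.card_fin]
  -- put it all together
  have hfinal : (∫ ω, (∑ i ∈ Finset.range n, W i ω) ^ a ∂P)
      ≤ (G.card : ℝ) * (1 + B) ^ a := by
    rw [hI, hsum_eq]
    calc ∑ g ∈ G, ∏ i ∈ Finset.image g Finset.univ, (∫ ω, W i ω ^ c g i ∂P)
        ≤ ∑ _g ∈ G, (1 + B) ^ a := Finset.sum_le_sum hterm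
      _ = (G.card : ℝ) * (1 + B) ^ a := by rw [Finset.sum_const, nsmul_eq_mul]
  refine hfinal.trans ?_
  have hcount : G.card ≤ (h + 1) * h ^ a * n ^ h := count_small_image n a h hn
  have h1B : (0:ℝ) ≤ (1 + B) ^ a := pow_nonneg (by linarith) a
  exact mul_le_mul_of_nonneg_right (by exact_mod_cast hcount) h1B

lemma euclid_sum_apply {k : ℕ} (s : Finset ℕ) (f : ℕ → EuclideanSpace ℝ (Fin k)) (j : Fin k) :
    (∑ i ∈ s, f i) j = ∑ i ∈ s, f i j := by
  classical
  induction s using Finset.cons_induction with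
  | empty => simp [PiLp.zero_apply]
  | cons i T hi IH => rw [Finset.sum_cons, Finset.sum_cons, PiLp.add_apply, IH]

lemma euclid_abs_coord_le {k : ℕ} (v : EuclideanSpace ℝ (Fin k)) (j : Fin k) :
    |v j| ≤ ‖v‖ := by
  rw [EuclideanSpace.norm_eq]
  have h1 : ‖v j‖ ^ 2 ≤ ∑ i, ‖v i‖ ^ 2 :=
    Finset.single_le_sum (f := fun i => ‖v i‖ ^ 2) (fun i _ => sq_nonneg _) (Finset.mem_univ j)
  calc |v j| = Real.sqrt (‖v j‖ ^ 2) := by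
        rw [Real.sqrt_sq_eq_abs, Real.norm_eq_abs, abs_abs]
    _ ≤ Real.sqrt (∑ i, ‖v i‖ ^ 2) := Real.sqrt_le_sqrt h1

lemma euclid_meas_coord {k : ℕ} (j : Fin k) :
    Measurable (fun v : EuclideanSpace ℝ (Fin k) => v j) :=
  (EuclideanSpace.proj j).continuous.measurable

lemma vector_moment_bound (k : ℕ) (hk : 2 ≤ k)
    {Ω : Type*} [MeasurableSpace Ω] {P : Measure Ω} [IsProbabilityMeasure P]
    (x : ℕ → Ω → EuclideanSpace ℝ (Fin k)) (x₀ : Ω → EuclideanSpace ℝ (Fin k))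
    (hx₀ : Measurable x₀) (hx : ∀ i, Measurable (x i))
    (hindep : iIndepFun x P)
    (hid : ∀ i, IdentDistrib (x i) x₀ P P)
    (h : ℕ) (hh : 1 ≤ h)
    (hmom : Integrable (fun ω => ‖x₀ ω‖ ^ (2 * h)) P)
    (μ : EuclideanSpace ℝ (Fin k)) (hμ : μ = ∫ ω, x₀ ω ∂P) :
    ∃ C₀ : ℝ, 0 ≤ C₀ ∧ ∀ n : ℕ, 1 ≤ n →
      Integrable (fun ω => ‖∑ i ∈ Finset.range n, (x i ω - μ)‖ ^ (2 * h)) P ∧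
      (∫ ω, ‖∑ i ∈ Finset.range n, (x i ω - μ)‖ ^ (2 * h) ∂P) ≤ C₀ * (n : ℝ) ^ h := by
  classical
  set a := 2 * h with ha
  have ha1 : 1 ≤ a := by omega
  -- basic integrability of x₀
  have hx₀int : Integrable x₀ P := by
    refine Integrable.mono' ((integrable_const 1).add hmom) hx₀.aestronglyMeasurable
      (Filter.Eventually.of_forall fun ω => ?_)
    have := abs_pow_le_one_add_abs_pow (‖x₀ ω‖) ha1
    rw [abs_of_nonneg (norm_nonneg _)] at this
    simpa using this
  -- coordinate processes
  set W : Fin k → ℕ → Ω → ℝ := fun j i ω => x i ω j - μ j with hW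
  set W₀ : Fin k → Ω → ℝ := fun j ω => x₀ ω j - μ j with hW₀def
  have hWm : ∀ j i, Measurable (W j i) :=
    fun j i => ((euclid_meas_coord j).comp (hx i)).sub measurable_const
  have hW₀m : ∀ j, Measurable (W₀ j) :=
    fun j => ((euclid_meas_coord j).comp hx₀).sub measurable_const
  have hφm : ∀ j : Fin k, Measurable (fun v : EuclideanSpace ℝ (Fin k) => v j - μ j) :=
    fun j => (euclid_meas_coord j).sub measurable_const
  have hWindep : ∀ j, iIndepFun (W j) P :=
    fun j => hindep.comp (fun _ v => v j - μ j) (fun _ => hφm j)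
  have hWid : ∀ j i, IdentDistrib (W j i) (W₀ j) P P :=
    fun j i => (hid i).comp (hφm j)
  -- coordinate of the mean
  have hcoordint : ∀ j, Integrable (fun ω => x₀ ω j) P := by
    intro j
    refine Integrable.mono' hx₀int.norm ((euclid_meas_coord j).comp hx₀).aestronglyMeasurable
      (Filter.Eventually.of_forall fun ω => ?_)
    simpa [Real.norm_eq_abs] using euclid_abs_coord_le (x₀ ω) j
  have hmean : ∀ j, (∫ ω, x₀ ω j ∂P) = μ j := by
    intro j
    have := (EuclideanSpace.proj (𝕜 := ℝ) j).integral_comp_comm hx₀int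
    simpa [hμ] using this
  have hcent : ∀ j, (∫ ω, W₀ j ω ∂P) = 0 := by
    intro j
    rw [hW₀def]
    simp only
    rw [integral_sub (hcoordint j) (integrable_const _), hmean j, integral_const]
    simp
  -- integrability of coordinate moments
  have hintj : ∀ j, Integrable (fun ω => |W₀ j ω| ^ a) P := by
    intro j
    refine Integrable.mono'
      (((hmom.add (integrable_const (‖μ‖ ^ a))).const_mul ((2:ℝ) ^ (a - 1))))
      (((hW₀m j).abs.pow_const a).aestronglyMeasurable)
      (Filter.Eventually.of_forall fun ω => ?_)
    have h1 : |W₀ j ω| ≤ ‖x₀ ω‖ + ‖μ‖ := by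
      have h2 : |W₀ j ω| = |(x₀ ω - μ) j| := by rw [PiLp.sub_apply]
      rw [h2]
      exact (euclid_abs_coord_le _ j).trans (norm_sub_le _ _)
    have h3 : |W₀ j ω| ^ a ≤ (‖x₀ ω‖ + ‖μ‖) ^ a :=
      pow_le_pow_left₀ (abs_nonneg _) h1 a
    have h4 : (‖x₀ ω‖ + ‖μ‖) ^ a ≤ 2 ^ (a - 1) * (‖x₀ ω‖ ^ a + ‖μ‖ ^ a) :=
      add_pow_le (norm_nonneg _) (norm_nonneg _) a
    rw [Real.norm_eq_abs, abs_pow, abs_abs]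
    exact h3.trans h4
  -- the constant
  set D : Fin k → ℝ := fun j => ∫ ω, |W₀ j ω| ^ a ∂P with hD
  have hD0 : ∀ j, 0 ≤ D j := fun j => integral_nonneg fun ω => pow_nonneg (abs_nonneg _) _
  set K : Fin k → ℝ := fun j => (((h + 1) * h ^ a : ℕ) : ℝ) * (1 + D j) ^ a with hK
  have hK0 : ∀ j, 0 ≤ K j := fun j =>
    mul_nonneg (Nat.cast_nonneg _) (pow_nonneg (by linarith [hD0 j]) _)
  refine ⟨(k : ℝ) ^ (h - 1) * ∑ j : Fin k, K j, ?_, ?_⟩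
  · exact mul_nonneg (pow_nonneg (Nat.cast_nonneg _) _)
      (Finset.sum_nonneg fun j _ => hK0 j)
  intro n hn
  -- scalar bounds per coordinate
  have hscal : ∀ j : Fin k,
      Integrable (fun ω => (∑ i ∈ Finset.range n, W j i ω) ^ a) P ∧
      (∫ ω, (∑ i ∈ Finset.range n, W j i ω) ^ a ∂P)
        ≤ (((h + 1) * h ^ a * n ^ h : ℕ) : ℝ) * (1 + D j) ^ a :=
    fun j => scalar_moment_bound (W j) (W₀ j) (hW₀m j) (hWm j) (hWindep j) (hWid j)
      (hcent j) h hh (hintj j) n hn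
  -- pointwise bound of the norm by coordinates
  have hpt : ∀ ω, ‖∑ i ∈ Finset.range n, (x i ω - μ)‖ ^ a
      ≤ (k : ℝ) ^ (h - 1) * ∑ j : Fin k, (∑ i ∈ Finset.range n, W j i ω) ^ a := by
    intro ω
    set v : EuclideanSpace ℝ (Fin k) := ∑ i ∈ Finset.range n, (x i ω - μ) with hv
    have hcoord : ∀ j, v j = ∑ i ∈ Finset.range n, W j i ω := by
      intro j
      rw [hv, euclid_sum_apply]
      exact Finset.sum_congr rfl fun i _ => rfl
    have hnorm : ‖v‖ ^ a = (∑ j : Fin k, v j ^ 2) ^ h := by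
      rw [ha, pow_mul]
      congr 1
      rw [EuclideanSpace.norm_eq, Real.sq_sqrt (Finset.sum_nonneg fun j _ => sq_nonneg _)]
      exact Finset.sum_congr rfl fun j _ => by rw [Real.norm_eq_abs, sq_abs]
    have hjensen : (∑ j : Fin k, v j ^ 2) ^ h
        ≤ (k : ℝ) ^ (h - 1) * ∑ j : Fin k, v j ^ a := by
      have hj := pow_sum_div_card_le_sum_pow (s := Finset.univ)
        (f := fun j : Fin k => v j ^ 2) (fun j _ => sq_nonneg _) (h - 1)
      rw [Nat.sub_add_cancel hh] at hj
      rw [Finset.card_univ, Fintype.card_fin] at hj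
      have hkpos : (0:ℝ) < (k : ℝ) ^ (h - 1) := by positivity
      rw [div_le_iff₀ hkpos] at hj
      calc (∑ j : Fin k, v j ^ 2) ^ h ≤ (∑ j : Fin k, (v j ^ 2) ^ h) * (k : ℝ) ^ (h - 1) := hj
        _ = (k : ℝ) ^ (h - 1) * ∑ j : Fin k, v j ^ a := by
            rw [mul_comm]
            congr 1
            exact Finset.sum_congr rfl fun j _ => by rw [ha, pow_mul]
    calc ‖v‖ ^ a = (∑ j : Fin k, v j ^ 2) ^ h := hnorm
      _ ≤ (k : ℝ) ^ (h - 1) * ∑ j : Fin k, v j ^ a := hjensen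
      _ = (k : ℝ) ^ (h - 1) * ∑ j : Fin k, (∑ i ∈ Finset.range n, W j i ω) ^ a := by
          congr 1
          exact Finset.sum_congr rfl fun j _ => by rw [hcoord j]
  -- the dominating function
  have hgint : Integrable (fun ω =>
      (k : ℝ) ^ (h - 1) * ∑ j : Fin k, (∑ i ∈ Finset.range n, W j i ω) ^ a) P :=
    (integrable_finset_sum _ fun j _ => (hscal j).1).const_mul _
  have hSmeas : Measurable (fun ω => ∑ i ∈ Finset.range n, (x i ω - μ)) :=
    Finset.measurable_sum _ fun i _ => (hx i).sub measurable_const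
  have hint1 : Integrable (fun ω => ‖∑ i ∈ Finset.range n, (x i ω - μ)‖ ^ a) P := by
    refine Integrable.mono' hgint (hSmeas.norm.pow_const a).aestronglyMeasurable
      (Filter.Eventually.of_forall fun ω => ?_)
    rw [Real.norm_eq_abs, abs_of_nonneg (pow_nonneg (norm_nonneg _) _)]
    exact hpt ω
  refine ⟨hint1, ?_⟩
  calc (∫ ω, ‖∑ i ∈ Finset.range n, (x i ω - μ)‖ ^ a ∂P)
      ≤ ∫ ω, (k : ℝ) ^ (h - 1) * ∑ j : Fin k, (∑ i ∈ Finset.range n, W j i ω) ^ a ∂P :=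
        integral_mono_of_nonneg
          (Filter.Eventually.of_forall fun ω => pow_nonneg (norm_nonneg _) _)
          hgint (Filter.Eventually.of_forall hpt)
    _ = (k : ℝ) ^ (h - 1) * ∑ j : Fin k, ∫ ω, (∑ i ∈ Finset.range n, W j i ω) ^ a ∂P := by
        rw [integral_const_mul, integral_finset_sum _ fun j _ => (hscal j).1]
    _ ≤ (k : ℝ) ^ (h - 1) * ∑ j : Fin k, K j * (n : ℝ) ^ h := by
        refine mul_le_mul_of_nonneg_left (Finset.sum_le_sum fun j _ => ?_)
          (pow_nonneg (Nat.cast_nonneg _) _)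
        refine ((hscal j).2).trans (le_of_eq ?_)
        rw [hK]
        push_cast
        ring
    _ = ((k : ℝ) ^ (h - 1) * ∑ j : Fin k, K j) * (n : ℝ) ^ h := by
        rw [← Finset.sum_mul, mul_assoc]


section ModulusLemmas

open scoped RealInnerProductSpace

variable {k : ℕ}

lemma modulus_inner_mem_bound (hk : 2 ≤ k) (Z : EuclideanSpace ℝ (Fin k)) {r : ℝ} (hr : 0 ≤ r) :
    ∀ t ∈ {t : ℝ | ∃ U V : sphere (0 : EuclideanSpace ℝ (Fin k)) 1,
        dist V U ≤ r ∧ t = |(fun V : sphere (0 : EuclideanSpace ℝ (Fin k)) 1 =>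
          ⟪Z, (V : EuclideanSpace ℝ (Fin k))⟫) V
          - (fun V : sphere (0 : EuclideanSpace ℝ (Fin k)) 1 =>
          ⟪Z, (V : EuclideanSpace ℝ (Fin k))⟫) U|},
      t ≤ ‖Z‖ * r := by
  rintro t ⟨U, V, hUV, rfl⟩
  simp only
  rw [← inner_sub_right]
  calc |⟪Z, (V : EuclideanSpace ℝ (Fin k)) - (U : EuclideanSpace ℝ (Fin k))⟫|
      ≤ ‖Z‖ * ‖(V : EuclideanSpace ℝ (Fin k)) - (U : EuclideanSpace ℝ (Fin k))‖ :=
        abs_real_inner_le_norm _ _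
    _ ≤ ‖Z‖ * r := by
        refine mul_le_mul_of_nonneg_left ?_ (norm_nonneg _)
        rw [← dist_eq_norm]
        rw [← Subtype.dist_eq]
        exact hUV

lemma modulus_inner_le (hk : 2 ≤ k) (Z : EuclideanSpace ℝ (Fin k)) {r : ℝ} (hr : 0 ≤ r) :
    modulusOfContinuity (fun V : sphere (0 : EuclideanSpace ℝ (Fin k)) 1 =>
      ⟪Z, (V : EuclideanSpace ℝ (Fin k))⟫) r ≤ ‖Z‖ * r :=
  Real.sSup_le (modulus_inner_mem_bound hk Z hr) (mul_nonneg (norm_nonneg _) hr)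

lemma modulus_inner_nonneg (hk : 2 ≤ k) (Z : EuclideanSpace ℝ (Fin k)) {r : ℝ} (hr : 0 ≤ r) :
    0 ≤ modulusOfContinuity (fun V : sphere (0 : EuclideanSpace ℝ (Fin k)) 1 =>
      ⟪Z, (V : EuclideanSpace ℝ (Fin k))⟫) r := by
  set V₀ : sphere (0 : EuclideanSpace ℝ (Fin k)) 1 :=
    ⟨EuclideanSpace.single ⟨0, by omega⟩ (1 : ℝ), by
      simp [mem_sphere_iff_norm, EuclideanSpace.norm_single]⟩ with hV₀
  refine le_csSup ⟨‖Z‖ * r, fun t ht => modulus_inner_mem_bound hk Z hr t ht⟩ ?_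
  exact ⟨V₀, V₀, by simpa using hr, by simp⟩

end ModulusLemmas

end Helpers

/-- Modulus-of-continuity estimate for the empirical tangent field on the unit sphere
`S^{k-1}`: for an even integer `a > k - 1` with `E‖x‖^a < ∞`, there are a finite
constant `C` and an integer `M` with `E[w(G_n, 2^{-m})^a] ≤ C 2^{-m(a-(k-1))}` for all
`n ≥ 1` and `m ≥ M`; consequently
`lim_{m→∞} limsup_{n→∞} E[min(w(G_n, 2^{-m}), 1)] = 0`. -/
theorem empiricalTangentField_modulus_bound
    (k : ℕ) (hk : 2 ≤ k)
    {Ω : Type*} [MeasurableSpace Ω] (P : Measure Ω) [IsProbabilityMeasure P]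
    (x : ℕ → Ω → EuclideanSpace ℝ (Fin k)) (x₀ : Ω → EuclideanSpace ℝ (Fin k))
    (hx₀ : Measurable x₀) (hx : ∀ i, Measurable (x i))
    (hindep : iIndepFun x P)
    (hid : ∀ i, IdentDistrib (x i) x₀ P P)
    (a : ℕ) (ha : Even a) (hak : (k : ℝ) - 1 < (a : ℝ))
    (hmom : Integrable (fun ω => ‖x₀ ω‖ ^ a) P) :
    (∃ C : ℝ, ∃ M : ℕ, ∀ n : ℕ, 1 ≤ n → ∀ m : ℕ, M ≤ m →
      (∫ ω, (modulusOfContinuity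
          (fun V : sphere (0 : EuclideanSpace ℝ (Fin k)) 1 =>
            empiricalTangentField P x x₀ n (V : EuclideanSpace ℝ (Fin k)) ω)
          ((2 : ℝ) ^ (-(m : ℝ)))) ^ a ∂P)
        ≤ C * (2 : ℝ) ^ (-(m : ℝ) * ((a : ℝ) - ((k : ℝ) - 1)))) ∧
    Tendsto
      (fun m : ℕ => atTop.limsup
        (fun n : ℕ =>
          ∫ ω, min (modulusOfContinuity
            (fun V : sphere (0 : EuclideanSpace ℝ (Fin k)) 1 =>
              empiricalTangentField P x x₀ n (V : EuclideanSpace ℝ (Fin k)) ω)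
            ((2 : ℝ) ^ (-(m : ℝ)))) 1 ∂P))
      atTop (𝓝 0) := by
  classical
  -- split the even exponent
  obtain ⟨h, hah⟩ : ∃ h : ℕ, a = 2 * h := by
    obtain ⟨r, hr⟩ := ha
    exact ⟨r, by omega⟩
  have hk2 : (2 : ℝ) ≤ (k : ℝ) := by exact_mod_cast hk
  have ha1R : (1 : ℝ) < (a : ℝ) := by linarith
  have ha2 : 2 ≤ a := by
    have : (1 : ℕ) < a := by exact_mod_cast ha1R
    omega
  have hh : 1 ≤ h := by omega
  have ha1 : 1 ≤ a := by omega
  set μ : EuclideanSpace ℝ (Fin k) := ∫ ω, x₀ ω ∂P with hμ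
  have hmom' : Integrable (fun ω => ‖x₀ ω‖ ^ (2 * h)) P := by rw [← hah]; exact hmom
  obtain ⟨C₀, hC₀0, hC₀⟩ :=
    vector_moment_bound k hk x x₀ hx₀ hx hindep hid h hh hmom' μ hμ
  have hx₀int : Integrable x₀ P := by
    refine Integrable.mono' ((integrable_const 1).add hmom) hx₀.aestronglyMeasurable
      (Filter.Eventually.of_forall fun ω => ?_)
    have := abs_pow_le_one_add_abs_pow (‖x₀ ω‖) ha1
    rw [abs_of_nonneg (norm_nonneg _)] at this
    simpa using this
  -- the linear representation of the empirical field
  set Z : ℕ → Ω → EuclideanSpace ℝ (Fin k) :=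
    fun n ω => (Real.sqrt n)⁻¹ • ∑ i ∈ Finset.range n, (x i ω - μ) with hZ
  have field_eq : ∀ (n : ℕ) (ω : Ω),
      (fun V : sphere (0 : EuclideanSpace ℝ (Fin k)) 1 =>
        empiricalTangentField P x x₀ n (V : EuclideanSpace ℝ (Fin k)) ω)
      = fun V : sphere (0 : EuclideanSpace ℝ (Fin k)) 1 =>
          ⟪Z n ω, (V : EuclideanSpace ℝ (Fin k))⟫ := by
    intro n ω
    funext V
    show (Real.sqrt n)⁻¹ * ∑ i ∈ Finset.range n,
        (⟪x i ω, (V : EuclideanSpace ℝ (Fin k))⟫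
          - ∫ ω', ⟪x₀ ω', (V : EuclideanSpace ℝ (Fin k))⟫ ∂P)
      = ⟪Z n ω, (V : EuclideanSpace ℝ (Fin k))⟫
    have hmu : (∫ ω', ⟪x₀ ω', (V : EuclideanSpace ℝ (Fin k))⟫ ∂P)
        = ⟪μ, (V : EuclideanSpace ℝ (Fin k))⟫ := by
      have h1 : (∫ ω', ⟪(V : EuclideanSpace ℝ (Fin k)), x₀ ω'⟫ ∂P)
          = ⟪(V : EuclideanSpace ℝ (Fin k)), μ⟫ := integral_inner hx₀int _
      calc (∫ ω', ⟪x₀ ω', (V : EuclideanSpace ℝ (Fin k))⟫ ∂P)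
          = ∫ ω', ⟪(V : EuclideanSpace ℝ (Fin k)), x₀ ω'⟫ ∂P := by
            congr 1
            funext ω'
            exact real_inner_comm _ _
        _ = ⟪(V : EuclideanSpace ℝ (Fin k)), μ⟫ := h1
        _ = ⟪μ, (V : EuclideanSpace ℝ (Fin k))⟫ := real_inner_comm _ _
    rw [hZ]
    simp only
    rw [real_inner_smul_left, sum_inner]
    congr 1
    refine Finset.sum_congr rfl fun i _ => ?_
    rw [inner_sub_left, hmu]
  -- moduli bounds
  have hr0 : ∀ m : ℕ, (0:ℝ) ≤ (2 : ℝ) ^ (-(m : ℝ)) :=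
    fun m => le_of_lt (Real.rpow_pos_of_pos two_pos _)
  have hwle : ∀ (m n : ℕ) (ω : Ω),
      modulusOfContinuity
        (fun V : sphere (0 : EuclideanSpace ℝ (Fin k)) 1 =>
          empiricalTangentField P x x₀ n (V : EuclideanSpace ℝ (Fin k)) ω)
        ((2 : ℝ) ^ (-(m : ℝ))) ≤ ‖Z n ω‖ * (2 : ℝ) ^ (-(m : ℝ)) := by
    intro m n ω
    rw [field_eq n ω]
    exact modulus_inner_le hk (Z n ω) (hr0 m)
  have hwnn : ∀ (m n : ℕ) (ω : Ω),
      0 ≤ modulusOfContinuity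
        (fun V : sphere (0 : EuclideanSpace ℝ (Fin k)) 1 =>
          empiricalTangentField P x x₀ n (V : EuclideanSpace ℝ (Fin k)) ω)
        ((2 : ℝ) ^ (-(m : ℝ))) := by
    intro m n ω
    rw [field_eq n ω]
    exact modulus_inner_nonneg hk (Z n ω) (hr0 m)
  -- moments of ‖Z n‖
  have hZpow : ∀ (n : ℕ), 1 ≤ n → ∀ ω,
      ‖Z n ω‖ ^ a = ((n : ℝ) ^ h)⁻¹ * ‖∑ i ∈ Finset.range n, (x i ω - μ)‖ ^ a := by
    intro n hn ω
    rw [hZ]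
    simp only
    rw [norm_smul, mul_pow]
    congr 1
    rw [norm_inv, Real.norm_eq_abs, abs_of_nonneg (Real.sqrt_nonneg _), inv_pow]
    congr 1
    rw [hah, pow_mul, Real.sq_sqrt (by positivity : (0:ℝ) ≤ (n:ℝ))]
  have hZmeas : ∀ n : ℕ, Measurable (Z n) := by
    intro n
    rw [hZ]
    exact (Finset.measurable_sum _ fun i _ => (hx i).sub measurable_const).const_smul ((Real.sqrt n)⁻¹ : ℝ)
  have hZaint : ∀ n : ℕ, 1 ≤ n → Integrable (fun ω => ‖Z n ω‖ ^ a) P := by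
    intro n hn
    have heq : (fun ω => ‖Z n ω‖ ^ a)
        = fun ω => ((n : ℝ) ^ h)⁻¹ * ‖∑ i ∈ Finset.range n, (x i ω - μ)‖ ^ (2*h) := by
      funext ω; rw [hZpow n hn ω, hah]
    rw [heq]
    exact ((hC₀ n hn).1).const_mul _
  have hZabound : ∀ n : ℕ, 1 ≤ n → (∫ ω, ‖Z n ω‖ ^ a ∂P) ≤ C₀ := by
    intro n hn
    have heq : (fun ω => ‖Z n ω‖ ^ a)
        = fun ω => ((n : ℝ) ^ h)⁻¹ * ‖∑ i ∈ Finset.range n, (x i ω - μ)‖ ^ (2*h) := by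
      funext ω; rw [hZpow n hn ω, hah]
    rw [heq, integral_const_mul]
    have hnh : (0:ℝ) < (n:ℝ) ^ h := by positivity
    calc ((n : ℝ) ^ h)⁻¹ * ∫ ω, ‖∑ i ∈ Finset.range n, (x i ω - μ)‖ ^ (2*h) ∂P
        ≤ ((n : ℝ) ^ h)⁻¹ * (C₀ * (n:ℝ) ^ h) := by
          refine mul_le_mul_of_nonneg_left ((hC₀ n hn).2) (by positivity)
      _ = C₀ := by field_simp
  constructor
  · -- first part: moment bound
    refine ⟨C₀, 0, fun n hn m _ => ?_⟩
    set r : ℝ := (2 : ℝ) ^ (-(m : ℝ)) with hrdef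
    have hgint : Integrable (fun ω => (‖Z n ω‖ * r) ^ a) P := by
      have heq : (fun ω => (‖Z n ω‖ * r) ^ a) = fun ω => ‖Z n ω‖ ^ a * r ^ a := by
        funext ω; rw [mul_pow]
      rw [heq]
      exact (hZaint n hn).mul_const _
    calc (∫ ω, (modulusOfContinuity
          (fun V : sphere (0 : EuclideanSpace ℝ (Fin k)) 1 =>
            empiricalTangentField P x x₀ n (V : EuclideanSpace ℝ (Fin k)) ω) r) ^ a ∂P)
        ≤ ∫ ω, (‖Z n ω‖ * r) ^ a ∂P := by
          refine integral_mono_of_nonneg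
            (Filter.Eventually.of_forall fun ω => pow_nonneg (hwnn m n ω) a) hgint
            (Filter.Eventually.of_forall fun ω => ?_)
          exact pow_le_pow_left₀ (hwnn m n ω) (hwle m n ω) a
      _ = (∫ ω, ‖Z n ω‖ ^ a ∂P) * r ^ a := by
          have heq : (fun ω => (‖Z n ω‖ * r) ^ a) = fun ω => ‖Z n ω‖ ^ a * r ^ a := by
            funext ω; rw [mul_pow]
          rw [heq, integral_mul_const]
      _ ≤ C₀ * r ^ a := by
          refine mul_le_mul_of_nonneg_right (hZabound n hn) (pow_nonneg (hr0 m) a)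
      _ ≤ C₀ * (2 : ℝ) ^ (-(m : ℝ) * ((a : ℝ) - ((k : ℝ) - 1))) := by
          refine mul_le_mul_of_nonneg_left ?_ hC₀0
          have hra : r ^ a = (2 : ℝ) ^ (-(m : ℝ) * (a : ℝ)) := by
            rw [hrdef, ← Real.rpow_natCast ((2:ℝ) ^ (-(m:ℝ))) a,
              ← Real.rpow_mul (by norm_num : (0:ℝ) ≤ 2)]
          rw [hra]
          refine Real.rpow_le_rpow_of_exponent_le one_le_two ?_
          have hm0 : (0:ℝ) ≤ (m:ℝ) := Nat.cast_nonneg m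
          nlinarith
  · -- second part: convergence of limsup
    -- uniform L¹ bound on ‖Z n‖
    have hZnint : ∀ n : ℕ, 1 ≤ n → Integrable (fun ω => ‖Z n ω‖) P := by
      intro n hn
      refine Integrable.mono' ((integrable_const 1).add (hZaint n hn))
        (hZmeas n).norm.aestronglyMeasurable (Filter.Eventually.of_forall fun ω => ?_)
      have := abs_pow_le_one_add_abs_pow (‖Z n ω‖) ha1
      rw [abs_of_nonneg (norm_nonneg _)] at this
      simpa using this
    have hZnbound : ∀ n : ℕ, 1 ≤ n → (∫ ω, ‖Z n ω‖ ∂P) ≤ 1 + C₀ := by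
      intro n hn
      calc (∫ ω, ‖Z n ω‖ ∂P) ≤ ∫ ω, (1 + ‖Z n ω‖ ^ a) ∂P := by
            refine integral_mono_of_nonneg
              (Filter.Eventually.of_forall fun ω => norm_nonneg _)
              ((integrable_const 1).add (hZaint n hn))
              (Filter.Eventually.of_forall fun ω => ?_)
            have := abs_pow_le_one_add_abs_pow (‖Z n ω‖) ha1
            rw [abs_of_nonneg (norm_nonneg _)] at this
            simpa using this
        _ = 1 + ∫ ω, ‖Z n ω‖ ^ a ∂P := by
            rw [integral_add (integrable_const 1) (hZaint n hn), integral_const]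
            simp
        _ ≤ 1 + C₀ := by linarith [hZabound n hn]
    set v : ℕ → ℕ → ℝ := fun m n =>
      ∫ ω, min (modulusOfContinuity
        (fun V : sphere (0 : EuclideanSpace ℝ (Fin k)) 1 =>
          empiricalTangentField P x x₀ n (V : EuclideanSpace ℝ (Fin k)) ω)
        ((2 : ℝ) ^ (-(m : ℝ)))) 1 ∂P with hv
    have hvnn : ∀ m n, 0 ≤ v m n := fun m n =>
      integral_nonneg fun ω => le_min (hwnn m n ω) zero_le_one
    have hvbound : ∀ m n, 1 ≤ n → v m n ≤ (2 : ℝ) ^ (-(m : ℝ)) * (1 + C₀) := by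
      intro m n hn
      calc v m n ≤ ∫ ω, ‖Z n ω‖ * (2 : ℝ) ^ (-(m : ℝ)) ∂P := by
            refine integral_mono_of_nonneg
              (Filter.Eventually.of_forall fun ω => le_min (hwnn m n ω) zero_le_one)
              ((hZnint n hn).mul_const _)
              (Filter.Eventually.of_forall fun ω => ?_)
            exact (min_le_left _ _).trans (hwle m n ω)
        _ = (∫ ω, ‖Z n ω‖ ∂P) * (2 : ℝ) ^ (-(m : ℝ)) := integral_mul_const _ _
        _ ≤ (1 + C₀) * (2 : ℝ) ^ (-(m : ℝ)) :=
            mul_le_mul_of_nonneg_right (hZnbound n hn) (hr0 m)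
        _ = (2 : ℝ) ^ (-(m : ℝ)) * (1 + C₀) := mul_comm _ _
    have hlimsup_le : ∀ m, atTop.limsup (v m) ≤ (2 : ℝ) ^ (-(m : ℝ)) * (1 + C₀) := by
      intro m
      refine Filter.limsup_le_of_le (Filter.isCoboundedUnder_le_of_le atTop (hvnn m)) ?_
      exact Filter.eventually_atTop.mpr ⟨1, fun n hn => hvbound m n hn⟩
    have hlimsup_ge : ∀ m, 0 ≤ atTop.limsup (v m) := by
      intro m
      refine Filter.le_limsup_of_frequently_le
        ((Filter.Eventually.of_forall (hvnn m)).frequently) ?_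
      exact Filter.isBoundedUnder_of_eventually_le
        (Filter.eventually_atTop.mpr ⟨1, fun n hn => hvbound m n hn⟩)
    have htend : Tendsto (fun m : ℕ => (2 : ℝ) ^ (-(m : ℝ)) * (1 + C₀)) atTop (𝓝 0) := by
      have heq : (fun m : ℕ => (2 : ℝ) ^ (-(m : ℝ))) = fun m : ℕ => ((2:ℝ)⁻¹) ^ m := by
        funext m
        rw [Real.rpow_neg (by norm_num : (0:ℝ) ≤ 2), Real.rpow_natCast, inv_pow]
      have h1 : Tendsto (fun m : ℕ => (2 : ℝ) ^ (-(m : ℝ))) atTop (𝓝 0) := by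
        rw [heq]
        exact tendsto_pow_atTop_nhds_zero_of_lt_one (by norm_num) (by norm_num)
      have := h1.mul_const (1 + C₀)
      simpa using this
    exact tendsto_of_tendsto_of_tendsto_of_le_of_le tendsto_const_nhds htend
      hlimsup_ge hlimsup_le
end

section
/- Let k ≥ 2, let S = S^{k−1} be the unit sphere of ℝ^k, and let x₁, x₂, … be i.i.d. ℝ^k-valued random variables distributed as x with E‖x‖^p < ∞ for every p ≥ 1. Let G_n(V) = n^{-1/2}·Σ_{i=1}^n (⟨x_i, V⟩ − E⟨x, V⟩) be the empirical tangent field, viewed (via its almost surely Lipschitz realization) as a random element of the Banach space C(S, ℝ) with the supremum norm. Then the sequence of laws of G_n on C(S, ℝ) is tight: for every ε > 0 there is a compact set K ⊆ C(S, ℝ) such that P(G_n ∈ K) > 1 − ε for all n ≥ 1. -/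
open MeasureTheory ProbabilityTheory Metric Filter Topology
open scoped RealInnerProductSpace NNReal ENNReal

/-- The empirical tangent field is the inner product against the normalized, centered
partial sum. -/
lemma empiricalTangentField_eq_inner {Ω H : Type*} [MeasurableSpace Ω]
    [NormedAddCommGroup H] [InnerProductSpace ℝ H] [CompleteSpace H]
    (P : Measure Ω) (x : ℕ → Ω → H) (x₀ : Ω → H) (hx₀i : Integrable x₀ P)
    (n : ℕ) (V : H) (ω : Ω) :
    empiricalTangentField P x x₀ n V ω
      = ⟪(Real.sqrt n)⁻¹ • ∑ i ∈ Finset.range n, (x i ω - ∫ ω', x₀ ω' ∂P), V⟫ := by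
  rw [empiricalTangentField, real_inner_smul_left, sum_inner]
  congr 1
  refine Finset.sum_congr rfl fun i _ => ?_
  rw [inner_sub_left]
  congr 1
  calc ∫ ω', ⟪x₀ ω', V⟫ ∂P = ∫ ω', ⟪V, x₀ ω'⟫ ∂P := by
        simp_rw [real_inner_comm]
    _ = ⟪V, ∫ ω', x₀ ω' ∂P⟫ := integral_inner hx₀i V
    _ = _ := real_inner_comm _ _

/-- The map sending `v ∈ ℝ^k` to the continuous function `V ↦ ⟪v, V⟫` on the unit sphere. -/
noncomputable def sphMap (k : ℕ) (v : EuclideanSpace ℝ (Fin k)) :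
    C(sphere (0 : EuclideanSpace ℝ (Fin k)) 1, ℝ) :=
  ⟨fun V => ⟪v, (V : EuclideanSpace ℝ (Fin k))⟫,
    (innerSL ℝ v).continuous.comp continuous_subtype_val⟩

lemma sphMap_lipschitz (k : ℕ) : LipschitzWith 1 (sphMap k) := by
  refine LipschitzWith.of_dist_le_mul fun u v => ?_
  rw [NNReal.coe_one, one_mul]
  refine (ContinuousMap.dist_le dist_nonneg).2 fun V => ?_
  have hV : ‖(V : EuclideanSpace ℝ (Fin k))‖ = 1 := norm_eq_of_mem_sphere V
  calc dist (sphMap k u V) (sphMap k v V) = |⟪u - v, (V : EuclideanSpace ℝ (Fin k))⟫| := by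
        simp only [Real.dist_eq, sphMap, ContinuousMap.coe_mk, ← inner_sub_left]
        exact (congrArg abs (inner_sub_left (𝕜 := ℝ) u v (V : EuclideanSpace ℝ (Fin k)))).symm
    _ ≤ ‖u - v‖ * ‖(V : EuclideanSpace ℝ (Fin k))‖ := abs_real_inner_le_norm _ _
    _ = dist u v := by rw [hV, mul_one, dist_eq_norm]

set_option maxHeartbeats 2000000 in
/-- Tightness of the empirical tangent fields in `C(S, ℝ)`: if `x₁, x₂, …` are i.i.d.
`ℝ^k`-valued random variables with all moments `E‖x‖^p` finite, and `Gc n : Ω → C(S, ℝ)`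
is the continuous realization of the empirical tangent field `G_n` on the unit sphere
`S = S^{k-1}`, then the laws of the `Gc n` are tight: for every `ε > 0` there is a
compact set `K ⊆ C(S, ℝ)` with `P(Gc n ∈ K) > 1 - ε` for all `n ≥ 1`. -/
theorem empiricalTangentField_tight
    (k : ℕ) (hk : 2 ≤ k)
    {Ω : Type*} [MeasurableSpace Ω] (P : Measure Ω) [IsProbabilityMeasure P]
    (x : ℕ → Ω → EuclideanSpace ℝ (Fin k)) (x₀ : Ω → EuclideanSpace ℝ (Fin k))
    (hx₀ : Measurable x₀) (hx : ∀ i, Measurable (x i))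
    (hindep : iIndepFun
      (m := fun _ : ℕ => (inferInstance : MeasurableSpace (EuclideanSpace ℝ (Fin k)))) x P)
    (hid : ∀ i, IdentDistrib (x i) x₀ P P)
    (hmom : ∀ p : ℕ, 1 ≤ p → Integrable (fun ω => ‖x₀ ω‖ ^ p) P)
    (Gc : ℕ → Ω → C(sphere (0 : EuclideanSpace ℝ (Fin k)) 1, ℝ))
    (hGc : ∀ n, ∀ᵐ ω ∂P, ∀ V : sphere (0 : EuclideanSpace ℝ (Fin k)) 1,
      Gc n ω V = empiricalTangentField P x x₀ n (V : EuclideanSpace ℝ (Fin k)) ω) :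
    ∀ ε : ℝ, 0 < ε →
      ∃ K : Set C(sphere (0 : EuclideanSpace ℝ (Fin k)) 1, ℝ),
        IsCompact K ∧ ∀ n : ℕ, 1 ≤ n → 1 - ENNReal.ofReal ε < P (Gc n ⁻¹' K) := by
  classical
  set m : EuclideanSpace ℝ (Fin k) := ∫ ω, x₀ ω ∂P with hm
  have hx₀i : Integrable x₀ P := by
    have h1 := hmom 1 le_rfl
    simp only [pow_one] at h1
    exact (integrable_norm_iff hx₀.aestronglyMeasurable).1 h1
  have hx₀2 : MemLp x₀ 2 P := by
    refine (memLp_two_iff_integrable_sq_norm hx₀.aestronglyMeasurable).2 ?_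
    exact_mod_cast hmom 2 (by norm_num)
  set Y : Fin k → ℕ → Ω → ℝ := fun c i => (fun v : EuclideanSpace ℝ (Fin k) => v c - m c) ∘ x i
    with hYd
  set g : Fin k → Ω → ℝ := fun c => (fun v : EuclideanSpace ℝ (Fin k) => v c - m c) ∘ x₀ with hg
  have hYdef : ∀ c i ω, Y c i ω = x i ω c - m c := fun c i ω => rfl
  have hφm : ∀ c : Fin k, Measurable (fun v : EuclideanSpace ℝ (Fin k) => v c - m c) := fun c =>
    ((EuclideanSpace.proj c : EuclideanSpace ℝ (Fin k) →L[ℝ] ℝ).continuous.measurable).sub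
      measurable_const
  have hidY : ∀ c i, IdentDistrib (Y c i) (g c) P P := fun c i => (hid i).comp (hφm c)
  have hprojint : ∀ c : Fin k, Integrable (fun ω => x₀ ω c) P := fun c =>
    (EuclideanSpace.proj c : EuclideanSpace ℝ (Fin k) →L[ℝ] ℝ).integrable_comp hx₀i
  have hg2 : ∀ c, MemLp (g c) 2 P := by
    intro c
    have h1 : MemLp ((EuclideanSpace.proj c : EuclideanSpace ℝ (Fin k) →L[ℝ] ℝ) ∘ x₀) 2 P :=
      (EuclideanSpace.proj c : EuclideanSpace ℝ (Fin k) →L[ℝ] ℝ).comp_memLp' hx₀2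
    have h2 := h1.sub (memLp_const (μ := P) (m c))
    simpa [hg, Function.comp_def, Pi.sub_def] using h2
  have hY2 : ∀ c i, MemLp (Y c i) 2 P := fun c i => (hidY c i).memLp_iff.mpr (hg2 c)
  have hYindep : ∀ c : Fin k,
      iIndepFun (m := fun _ : ℕ => (inferInstance : MeasurableSpace ℝ)) (fun i => Y c i) P :=
    fun c => hindep.comp _ (fun _ => hφm c)
  have hgmean : ∀ c, ∫ ω, g c ω ∂P = 0 := by
    intro c
    have h2 : ∫ ω, x₀ ω c ∂P = m c :=
      (EuclideanSpace.proj c : EuclideanSpace ℝ (Fin k) →L[ℝ] ℝ).integral_comp_comm hx₀i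
    have h3 : ∫ ω, g c ω ∂P = (∫ ω, x₀ ω c ∂P) - m c := by
      have := integral_sub (hprojint c) (integrable_const (μ := P) (m c))
      simpa [hg, Function.comp_def] using this
    rw [h3, h2, sub_self]
  have hYmean : ∀ c i, ∫ ω, Y c i ω ∂P = 0 := fun c i => by
    rw [(hidY c i).integral_eq]; exact hgmean c
  set S : ℕ → Ω → EuclideanSpace ℝ (Fin k) :=
    fun n ω => (Real.sqrt n)⁻¹ • ∑ i ∈ Finset.range n, (x i ω - m) with hS
  set C : ℝ := ∑ c : Fin k, variance (g c) P with hC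
  have hC0 : 0 ≤ C := Finset.sum_nonneg fun c _ => variance_nonneg _ _
  have hT2 : ∀ (c : Fin k) (n : ℕ), MemLp (fun ω => ∑ i ∈ Finset.range n, Y c i ω) 2 P := by
    intro c n
    exact (memLp_finset_sum' (Finset.range n) (fun i (_ : i ∈ Finset.range n) => hY2 c i)).ae_eq
      (ae_of_all _ fun ω => by simp)
  have hTmean : ∀ (c : Fin k) (n : ℕ), ∫ ω, (∑ i ∈ Finset.range n, Y c i ω) ∂P = 0 := by
    intro c n
    rw [integral_finset_sum _ (fun i _ => (hY2 c i).integrable one_le_two)]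
    simp [hYmean]
  have hTsq : ∀ (c : Fin k) (n : ℕ),
      ∫ ω, (∑ i ∈ Finset.range n, Y c i ω) ^ 2 ∂P = n * variance (g c) P := by
    intro c n
    have hvar := (IndepFun.variance_sum (μ := P) (X := fun i => Y c i) (s := Finset.range n)
      (fun i _ => hY2 c i)
      (fun i _ j _ hij => (hYindep c).indepFun hij))
    have hdef := variance_eq_sub (μ := P) (memLp_finset_sum' (Finset.range n)
      (fun i (_ : i ∈ Finset.range n) => hY2 c i))
    have hvg : ∀ i ∈ Finset.range n, variance (Y c i) P = variance (g c) P :=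
      fun i _ => (hidY c i).variance_eq
    rw [Finset.sum_congr rfl hvg, Finset.sum_const, Finset.card_range, nsmul_eq_mul] at hvar
    rw [← hvar, hdef]
    have hms : ∫ ω, (∑ i ∈ Finset.range n, Y c i) ω ∂P = 0 := by
      simpa [Finset.sum_apply] using hTmean c n
    rw [hms]
    simp only [Pi.pow_apply, Finset.sum_apply, ne_eq, OfNat.ofNat_ne_zero,
      not_false_eq_true, zero_pow, sub_zero]
  have hv : ∀ v : EuclideanSpace ℝ (Fin k), ‖v‖ ^ 2 = ∑ c, (v c) ^ 2 := fun v => by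
    rw [EuclideanSpace.norm_eq, Real.sq_sqrt (by positivity)]
    simp [Real.norm_eq_abs, sq_abs]
  have hsq : ∀ n : ℕ, ((Real.sqrt n)⁻¹) ^ 2 = (n : ℝ)⁻¹ := fun n => by
    rw [inv_pow, Real.sq_sqrt (Nat.cast_nonneg n)]
  have hSnorm : ∀ n ω, ‖S n ω‖ ^ 2
      = (n : ℝ)⁻¹ * ∑ c : Fin k, (∑ i ∈ Finset.range n, Y c i ω) ^ 2 := by
    intro n ω
    rw [hv, Finset.mul_sum]
    refine Finset.sum_congr rfl fun c _ => ?_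
    have h1 : (∑ i ∈ Finset.range n, (x i ω - m)) c = ∑ i ∈ Finset.range n, (x i ω c - m c) := by
      have := map_sum (EuclideanSpace.proj (𝕜 := ℝ) c) (fun i => x i ω - m) (Finset.range n)
      simpa using this
    have hcoord : S n ω c = (Real.sqrt n)⁻¹ * ∑ i ∈ Finset.range n, Y c i ω := by
      rw [hS]
      show (Real.sqrt n)⁻¹ * (∑ i ∈ Finset.range n, (x i ω - m)) c = _
      rw [h1]
      simp [hYdef]
    rw [hcoord, mul_pow, hsq]
  have hSintg : ∀ n : ℕ, Integrable (fun ω => ‖S n ω‖ ^ 2) P ∧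
      ∫ ω, ‖S n ω‖ ^ 2 ∂P = (n : ℝ)⁻¹ * ((n : ℝ) * C) := by
    intro n
    have hint : Integrable (fun ω => ∑ c : Fin k, (∑ i ∈ Finset.range n, Y c i ω) ^ 2) P :=
      integrable_finset_sum _ (fun c _ => (hT2 c n).integrable_sq)
    constructor
    · have := hint.const_mul ((n : ℝ)⁻¹)
      exact this.congr (ae_of_all _ fun ω => (hSnorm n ω).symm)
    · calc ∫ ω, ‖S n ω‖ ^ 2 ∂P
          = ∫ ω, (n : ℝ)⁻¹ * ∑ c : Fin k, (∑ i ∈ Finset.range n, Y c i ω) ^ 2 ∂P := by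
            exact integral_congr_ae (ae_of_all _ fun ω => hSnorm n ω)
        _ = (n : ℝ)⁻¹ * ∫ ω, ∑ c : Fin k, (∑ i ∈ Finset.range n, Y c i ω) ^ 2 ∂P :=
            integral_const_mul _ _
        _ = (n : ℝ)⁻¹ * ∑ c : Fin k, ∫ ω, (∑ i ∈ Finset.range n, Y c i ω) ^ 2 ∂P := by
            rw [integral_finset_sum _ (fun c _ => (hT2 c n).integrable_sq)]
        _ = (n : ℝ)⁻¹ * ((n : ℝ) * C) := by
            have hsum : ∑ c : Fin k, ∫ ω, (∑ i ∈ Finset.range n, Y c i ω) ^ 2 ∂P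
                = (n : ℝ) * C := by
              rw [hC, Finset.mul_sum]
              exact Finset.sum_congr rfl fun c _ => hTsq c n
            rw [hsum]
  have hSmeas : ∀ n, Measurable (S n) := by
    intro n
    refine Measurable.const_smul (g := fun ω => ∑ i ∈ Finset.range n, (x i ω - m)) ?_ (Real.sqrt n)⁻¹
    exact Finset.measurable_sum _ (fun i _ => (hx i).sub measurable_const)
  -- main argument
  intro ε hε
  set δ : ℝ := min ε (1 / 2) with hδd
  have hδ : 0 < δ := lt_min hε (by norm_num)
  have hδ2 : δ ≤ 1 / 2 := min_le_right _ _
  set L : ℝ := Real.sqrt ((C + 1) / δ) with hLd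
  have hL : 0 < L := Real.sqrt_pos.2 (by positivity)
  have hL2 : L ^ 2 = (C + 1) / δ := Real.sq_sqrt (by positivity)
  have hCL : C / L ^ 2 < δ := by
    rw [hL2, div_div_eq_mul_div, div_lt_iff₀ (by positivity)]
    nlinarith
  refine ⟨sphMap k '' closedBall 0 L,
    (isCompact_closedBall _ _).image (sphMap_lipschitz k).continuous, ?_⟩
  intro n hn
  set A : Set Ω := {ω | ‖S n ω‖ ≤ L} with hAd
  have hA : MeasurableSet A := measurableSet_le (hSmeas n).norm measurable_const
  have hn0 : (n : ℝ) ≠ 0 := Nat.cast_ne_zero.2 (by omega)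
  have hval : ∫ ω, ‖S n ω‖ ^ 2 ∂P = C := by
    rw [(hSintg n).2, ← mul_assoc, inv_mul_cancel₀ hn0, one_mul]
  -- Chebyshev bound
  have hcheb : P Aᶜ < ENNReal.ofReal δ := by
    have hfm : Measurable fun ω => ENNReal.ofReal (‖S n ω‖ ^ 2) :=
      (((hSmeas n).norm.pow_const 2)).ennreal_ofReal
    have h1 := mul_meas_ge_le_lintegral₀ (μ := P) hfm.aemeasurable (ENNReal.ofReal (L ^ 2))
    have h2 : ∫⁻ ω, ENNReal.ofReal (‖S n ω‖ ^ 2) ∂P = ENNReal.ofReal C := by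
      rw [← ofReal_integral_eq_lintegral_ofReal (hSintg n).1 (ae_of_all _ fun ω => by positivity),
        hval]
    rw [h2] at h1
    have hsub : Aᶜ ⊆ {ω | ENNReal.ofReal (L ^ 2) ≤ ENNReal.ofReal (‖S n ω‖ ^ 2)} := by
      intro ω hω
      have hω' : L < ‖S n ω‖ := not_le.1 hω
      exact ENNReal.ofReal_le_ofReal (by nlinarith)
    have h3 : P Aᶜ ≤ ENNReal.ofReal C / ENNReal.ofReal (L ^ 2) := by
      refine le_trans (measure_mono hsub) ?_
      rw [ENNReal.le_div_iff_mul_le (Or.inl (ENNReal.ofReal_pos.2 (pow_pos hL 2)).ne')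
        (Or.inl ENNReal.ofReal_ne_top)]
      rw [mul_comm]
      exact h1
    have h4 : ENNReal.ofReal C / ENNReal.ofReal (L ^ 2) = ENNReal.ofReal (C / L ^ 2) := by
      rw [ENNReal.ofReal_div_of_pos (pow_pos hL 2)]
    calc P Aᶜ ≤ ENNReal.ofReal (C / L ^ 2) := by rw [← h4]; exact h3
      _ < ENNReal.ofReal δ := (ENNReal.ofReal_lt_ofReal_iff hδ).2 hCL
  -- A (up to the null set of hGc) maps into K
  set Q : Set Ω := {ω | ∀ V : sphere (0 : EuclideanSpace ℝ (Fin k)) 1,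
      Gc n ω V = empiricalTangentField P x x₀ n (V : EuclideanSpace ℝ (Fin k)) ω} with hQd
  have hQnull : P Qᶜ = 0 := by
    have := hGc n
    rwa [ae_iff] at this
  have hsub2 : A ∩ Q ⊆ Gc n ⁻¹' (sphMap k '' closedBall 0 L) := by
    rintro ω ⟨h1, h2⟩
    refine ⟨S n ω, mem_closedBall_zero_iff.2 h1, ?_⟩
    ext V
    rw [h2 V, empiricalTangentField_eq_inner P x x₀ hx₀i n _ ω]
    rfl
  have hPA : P A ≤ P (Gc n ⁻¹' (sphMap k '' closedBall 0 L)) := by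
    rw [← measure_inter_conull hQnull]
    exact measure_mono hsub2
  have hδ1 : ENNReal.ofReal δ ≤ 1 := by
    rw [← ENNReal.ofReal_one]
    exact ENNReal.ofReal_le_ofReal (by linarith)
  have hlt : (1 : ℝ≥0∞) - ENNReal.ofReal δ < P A := by
    rw [ENNReal.sub_lt_iff_lt_right ENNReal.ofReal_ne_top hδ1]
    calc (1 : ℝ≥0∞) = P A + P Aᶜ := by
          rw [measure_add_measure_compl hA, measure_univ]
      _ < P A + ENNReal.ofReal δ := ENNReal.add_lt_add_left (measure_ne_top P A) hcheb
  calc (1 : ℝ≥0∞) - ENNReal.ofReal ε ≤ 1 - ENNReal.ofReal δ :=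
        tsub_le_tsub_left (ENNReal.ofReal_le_ofReal (min_le_left _ _)) 1
    _ < P A := hlt
    _ ≤ _ := hPA
end
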